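/- Let γ ≥ 1, μ > 0, v₊ > 2. For each sufficiently small ε > 0 let v̄_ε : ℝ → (v₋^ε, v₊) be the unique monotone heteroclinic solution of v̄_ε' = (v̄_ε/(μ s_ε)) Φ_ε(v̄_ε) normalized by v̄_ε(0) = 1 + ε^{1/(γ+1)}, where p_ε, v₋^ε, s_ε, Φ_ε are as in the soft-congestion setting. Let s := 1/sqrt(v₊ − 1) and let v̄ be the limit profile v̄(x) = 1 for x ≤ 0, v̄(x) = v₊/(1 + (v₊ − 1) exp(−s v₊ x/μ)) for x > 0. Then there exists a sequence ε_n → 0⁺ such that v̄_{ε_n} → v̄ uniformly on every compact subset of ℝ, i.e. for every R > 0, sup_{|x| ≤ R} |v̄_{ε_n}(x) − v̄(x)| → 0 as n → ∞. -/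

import Mathlib

set_option maxHeartbeats 1000000

open Set Filter

lemma glog_hasDerivAt (s vp μ : ℝ) (hμ : 0 < μ) (hvp : 1 < vp) (y : ℝ) :
    HasDerivAt (fun x => vp * (1 + (vp - 1) * Real.exp (-s * vp * x / μ))⁻¹)
      (s * (vp * (1 + (vp - 1) * Real.exp (-s * vp * y / μ))⁻¹) *
        (vp - vp * (1 + (vp - 1) * Real.exp (-s * vp * y / μ))⁻¹) / μ) y := by
  have hD : ∀ x : ℝ, 0 < 1 + (vp - 1) * Real.exp (-s * vp * x / μ) := by
    intro x
    have := Real.exp_pos (-s * vp * x / μ)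
    nlinarith
  have h1 : HasDerivAt (fun x : ℝ => -s * vp * x / μ) (-s * vp / μ) y := by
    simpa using ((hasDerivAt_id y).const_mul (-s * vp)).div_const μ
  have h4 := (((h1.exp.const_mul (vp - 1)).const_add 1).inv (ne_of_gt (hD y))).const_mul vp
  refine h4.congr_deriv ?_
  have hDpos := hD y
  set t := Real.exp (-s * vp * y / μ) with ht
  have hDne : 1 + (vp - 1) * t ≠ 0 := ne_of_gt hDpos
  field_simp
  ring

/-- Along a sequence `ε_n → 0⁺`, the normalized soft-congestion profiles `v̄_{ε_n}` converge
to the limit free–congested profile `v̄` uniformly on every compact subset of `ℝ`. -/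
theorem stmt10 (γ μ vp : ℝ) (hγ : 1 ≤ γ) (hμ : 0 < μ) (hvp : 2 < vp)
    (pe : ℝ → ℝ → ℝ) (hpe : ∀ ε v : ℝ, pe ε v = ε * (v - 1) ^ (-γ))
    (vm : ℝ → ℝ) (hvm : ∀ ε : ℝ, vm ε = 1 + ε ^ (1 / γ))
    (se : ℝ → ℝ) (hse : ∀ ε : ℝ, se ε = Real.sqrt ((pe ε (vm ε) - pe ε vp) / (vp - vm ε)))
    (Φ : ℝ → ℝ → ℝ) (hΦ : ∀ ε v : ℝ, Φ ε v = (se ε) ^ 2 * (vp - v) + pe ε vp - pe ε v)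
    (ε₀ : ℝ) (hε₀ : 0 < ε₀)
    (vb : ℝ → ℝ → ℝ)
    (hrange : ∀ ε ∈ Ioo (0 : ℝ) ε₀, ∀ x : ℝ, vb ε x ∈ Ioo (vm ε) vp)
    (hode : ∀ ε ∈ Ioo (0 : ℝ) ε₀, ∀ x : ℝ,
      HasDerivAt (vb ε) (vb ε x / (μ * se ε) * Φ ε (vb ε x)) x)
    (hmono : ∀ ε ∈ Ioo (0 : ℝ) ε₀, StrictMono (vb ε))
    (hlim_bot : ∀ ε ∈ Ioo (0 : ℝ) ε₀, Tendsto (vb ε) atBot (nhds (vm ε)))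
    (hlim_top : ∀ ε ∈ Ioo (0 : ℝ) ε₀, Tendsto (vb ε) atTop (nhds vp))
    (hnorm : ∀ ε ∈ Ioo (0 : ℝ) ε₀, vb ε 0 = 1 + ε ^ (1 / (γ + 1)))
    (s : ℝ) (hs : s = 1 / Real.sqrt (vp - 1))
    (vlim : ℝ → ℝ)
    (hvlim : ∀ x : ℝ,
      vlim x = if x ≤ 0 then 1 else vp / (1 + (vp - 1) * Real.exp (-s * vp * x / μ))) :
    ∃ εn : ℕ → ℝ,
      (∀ n : ℕ, εn n ∈ Ioo (0 : ℝ) ε₀) ∧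
      Tendsto εn atTop (nhds 0) ∧
      ∀ R > (0 : ℝ), ∀ δ > (0 : ℝ), ∃ N : ℕ, ∀ n ≥ N, ∀ x : ℝ, |x| ≤ R →
        |vb (εn n) x - vlim x| < δ := by
  have hvp1 : (1 : ℝ) < vp := by linarith
  have hγ0 : (0 : ℝ) < γ := by linarith
  have hγ1 : (0 : ℝ) < γ + 1 := by linarith
  have hsq : 0 < Real.sqrt (vp - 1) := Real.sqrt_pos.2 (by linarith)
  have hs0 : 0 < s := by rw [hs]; positivity
  set l : Filter ℝ := nhdsWithin (0 : ℝ) (Ioi 0) with hl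
  have hrpow : ∀ q : ℝ, 0 < q → Tendsto (fun ε : ℝ => ε ^ q) l (nhds 0) := by
    intro q hq
    have c := (Real.continuousAt_rpow_const 0 q (Or.inr hq.le)).tendsto
    rw [Real.zero_rpow (ne_of_gt hq)] at c
    exact c.mono_left nhdsWithin_le_nhds
  have ha0 : Tendsto (fun ε : ℝ => ε ^ (1 / (γ + 1))) l (nhds 0) := hrpow _ (by positivity)
  have hid0 : Tendsto (fun ε : ℝ => ε) l (nhds 0) :=
    (continuous_id.tendsto 0).mono_left nhdsWithin_le_nhds
  have hpevp0 : Tendsto (fun ε => pe ε vp) l (nhds 0) := by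
    have heq : (fun ε => pe ε vp) = fun ε : ℝ => ε * (vp - 1) ^ (-γ) := funext fun ε => hpe ε vp
    rw [heq]
    have hz : (0:ℝ) * (vp - 1) ^ (-γ) = 0 := by ring
    rw [← hz]
    exact hid0.mul_const _
  have hseT : Tendsto se l (nhds s) := by
    have hden : Tendsto (fun ε : ℝ => vp - vm ε) l (nhds (vp - 1)) := by
      have h1 := hrpow (1 / γ) (by positivity)
      have heq : (fun ε : ℝ => vp - vm ε) = fun ε : ℝ => vp - (1 + ε ^ (1 / γ)) :=
        funext fun ε => by rw [hvm]
      rw [heq]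
      have h2 := (tendsto_const_nhds (α := ℝ) (x := vp)).sub
        ((tendsto_const_nhds (α := ℝ) (x := (1:ℝ))).add h1)
      have hz : vp - ((1:ℝ) + 0) = vp - 1 := by ring
      rw [← hz]
      exact h2
    have hbase : Tendsto (fun ε : ℝ => 1 - ε * (vp - 1) ^ (-γ)) l (nhds 1) := by
      have h2 := (tendsto_const_nhds (α := ℝ) (x := (1:ℝ))).sub
        (hid0.mul_const ((vp - 1) ^ (-γ)))
      convert h2 using 2
      ring
    have hev : (fun ε : ℝ => (1 : ℝ) - ε * (vp - 1) ^ (-γ))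
        =ᶠ[l] fun ε => pe ε (vm ε) - pe ε vp := by
      filter_upwards [self_mem_nhdsWithin] with ε hε
      have hε0 : (0:ℝ) < ε := hε
      have hA : pe ε (vm ε) = 1 := by
        rw [hpe, hvm]
        have h1 : (1 + ε ^ (1/γ) - 1 : ℝ) = ε ^ (1/γ) := by ring
        rw [h1, ← Real.rpow_mul hε0.le]
        have h2 : 1/γ * (-γ) = -1 := by field_simp
        rw [h2, Real.rpow_neg_one, mul_inv_cancel₀ (ne_of_gt hε0)]
      rw [hA, hpe]
    have hnum : Tendsto (fun ε : ℝ => pe ε (vm ε) - pe ε vp) l (nhds 1) :=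
      Tendsto.congr' hev hbase
    have hfrac : Tendsto (fun ε : ℝ => (pe ε (vm ε) - pe ε vp) / (vp - vm ε)) l
        (nhds (1 / (vp - 1))) := hnum.div hden (by intro h; nlinarith)
    have hfun : se = fun ε => Real.sqrt ((pe ε (vm ε) - pe ε vp) / (vp - vm ε)) := funext hse
    rw [hfun]
    have hsq2 : Real.sqrt (1 / (vp - 1)) = s := by
      rw [hs, one_div, one_div, Real.sqrt_inv]
    rw [← hsq2]
    exact (Real.continuous_sqrt.tendsto _).comp hfrac
  have hm01 : 0 < min ε₀ 1 := lt_min hε₀ one_pos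
  have key : ∀ R > (0 : ℝ), ∀ δ > (0 : ℝ),
      ∀ᶠ ε in l, ∀ x : ℝ, |x| ≤ R → |vb ε x - vlim x| < δ := by
    intro R hR δ hδ
    set Kr := s * vp / μ with hKr
    have hKr0 : 0 < Kr := by positivity
    set K' : NNReal := ⟨Kr, hKr0.le⟩ with hK'
    have hK'c : (K' : ℝ) = Kr := rfl
    set glog : ℝ → ℝ := fun x => vp * (1 + (vp - 1) * Real.exp (-s * vp * x / μ))⁻¹ with hglog
    have hDpos : ∀ x : ℝ, 0 < 1 + (vp - 1) * Real.exp (-s * vp * x / μ) := fun x => by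
      nlinarith [Real.exp_pos (-s * vp * x / μ)]
    have hD1 : ∀ x : ℝ, 1 < 1 + (vp - 1) * Real.exp (-s * vp * x / μ) := fun x => by
      nlinarith [Real.exp_pos (-s * vp * x / μ)]
    have hglog_mem : ∀ x : ℝ, glog x ∈ Icc (0 : ℝ) vp := by
      intro x
      constructor
      · exact le_of_lt (mul_pos (by linarith) (inv_pos.2 (hDpos x)))
      · calc vp * (1 + (vp - 1) * Real.exp (-s * vp * x / μ))⁻¹
            ≤ vp * 1 := by
              apply mul_le_mul_of_nonneg_left _ (by linarith)
              exact inv_le_one_of_one_le₀ (hD1 x).le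
          _ = vp := mul_one vp
    have hglog0 : glog 0 = 1 := by
      have : (-s * vp * 0 / μ) = 0 := by ring
      rw [hglog]
      simp only [this, Real.exp_zero, mul_one]
      have hvp0 : vp ≠ 0 := by linarith
      field_simp
      rw [show (1:ℝ) + (vp - 1) = vp by ring, div_self hvp0]
    have hvlim_eq : ∀ y : ℝ, 0 ≤ y → vlim y = glog y := by
      intro y hy
      rcases eq_or_lt_of_le hy with h | h
      · rw [← h, hvlim]
        simp only [le_refl, if_pos]
        exact hglog0.symm
      · rw [hvlim, if_neg (not_le.2 h), hglog, div_eq_mul_inv]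
    have hVlip : ∀ t : ℝ, LipschitzOnWith K' (fun v : ℝ => s * v * (vp - v) / μ) (Icc 0 vp) := by
      intro t
      apply (convex_Icc (0:ℝ) vp).lipschitzOnWith_of_nnnorm_hasDerivWithin_le
        (f' := fun v => s * (vp - 2 * v) / μ)
      · intro v hv
        have h : HasDerivAt (fun v : ℝ => s * v * (vp - v) / μ) (s * (vp - 2 * v) / μ) v := by
          have h := (((hasDerivAt_id v).const_mul s).mul
            ((hasDerivAt_const v vp).sub (hasDerivAt_id v))).div_const μ
          refine h.congr_deriv ?_
          simp [id]
          ring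
        exact h.hasDerivWithinAt
      · intro v hv
        rw [← NNReal.coe_le_coe, coe_nnnorm, hK'c, hKr, Real.norm_eq_abs, abs_div, abs_mul,
          abs_of_pos hμ, abs_of_pos hs0]
        have habs : |vp - 2 * v| ≤ vp := abs_le.2 ⟨by linarith [hv.2], by linarith [hv.1]⟩
        gcongr
    set C : ℝ → ℝ := fun ε =>
      vp * vp * |se ε - s| / μ + vp / (μ * (s / 2)) * (pe ε vp + ε ^ (1 / (γ + 1))) with hC
    have hC0 : Tendsto C l (nhds 0) := by
      have habs : Tendsto (fun ε => |se ε - s|) l (nhds 0) := by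
        have := (hseT.sub_const s).abs
        simpa using this
      have h1 := (habs.const_mul (vp * vp)).div_const μ
      have h2 := (hpevp0.add ha0).const_mul (vp / (μ * (s / 2)))
      have hz : (vp * vp * (0:ℝ)) / μ + vp / (μ * (s / 2)) * ((0:ℝ) + 0) = 0 := by ring
      rw [← hz]
      exact h1.add h2
    set errB : ℝ → ℝ := fun ε =>
      ε ^ (1 / (γ + 1)) * Real.exp (Kr * R) + C ε / Kr * (Real.exp (Kr * R) - 1) with herrB
    have herrB0 : Tendsto errB l (nhds 0) := by
      have h1 := (ha0.mul_const (Real.exp (Kr * R))).add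
        ((hC0.div_const Kr).mul_const (Real.exp (Kr * R) - 1))
      have hz : (0:ℝ) * Real.exp (Kr * R) + (0:ℝ) / Kr * (Real.exp (Kr * R) - 1) = 0 := by ring
      rw [← hz]
      exact h1
    have h1 : ∀ᶠ ε in l, ε ∈ Ioo (0 : ℝ) (min ε₀ 1) := by
      rw [hl]
      exact Ioo_mem_nhdsGT_of_mem ⟨le_refl 0, hm01⟩
    have h2 : ∀ᶠ ε in l, s / 2 < se ε := hseT.eventually_const_lt (by linarith)
    have h3 : ∀ᶠ ε in l, errB ε < δ := herrB0.eventually_lt_const hδ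
    filter_upwards [h1, h2, h3] with ε hεm hεse hεerr
    intro x hx
    have hε0 : 0 < ε := hεm.1
    have hεε₀ : ε ∈ Ioo (0 : ℝ) ε₀ := ⟨hε0, lt_of_lt_of_le hεm.2 (min_le_left _ _)⟩
    set a := ε ^ (1 / (γ + 1)) with haa
    have ha_pos : 0 < a := Real.rpow_pos_of_pos hε0 _
    have hvb0 : vb ε 0 = 1 + a := hnorm ε hεε₀
    have hvm1 : 1 < vm ε := by
      rw [hvm]
      nlinarith [Real.rpow_pos_of_pos hε0 (1 / γ)]
    have hrange' := hrange ε hεε₀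
    have hmono' := (hmono ε hεε₀).monotone
    have hpe_nonneg : ∀ v : ℝ, 1 < v → 0 ≤ pe ε v := fun v hv => by
      rw [hpe]
      have h9 : (0:ℝ) < v - 1 := by linarith
      positivity
    have hpe_le : ∀ t : ℝ, 0 ≤ t → pe ε (vb ε t) ≤ a := by
      intro t ht
      have hble : 1 + a ≤ vb ε t := by rw [← hvb0]; exact hmono' ht
      rw [hpe]
      have h2' : (vb ε t - 1) ^ (-γ) ≤ a ^ (-γ) :=
        Real.rpow_le_rpow_of_nonpos ha_pos (by linarith) (by linarith)
      have h3' : ε * (vb ε t - 1) ^ (-γ) ≤ ε * a ^ (-γ) :=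
        mul_le_mul_of_nonneg_left h2' hε0.le
      refine le_trans h3' (le_of_eq ?_)
      rw [haa]
      calc ε * (ε ^ (1 / (γ + 1))) ^ (-γ)
          = ε ^ (1 : ℝ) * ε ^ (1 / (γ + 1) * (-γ)) := by
            rw [Real.rpow_one, ← Real.rpow_mul hε0.le]
        _ = ε ^ (1 + 1 / (γ + 1) * (-γ)) := (Real.rpow_add hε0 _ _).symm
        _ = ε ^ (1 / (γ + 1)) := by
            congr 1
            have hne : γ + 1 ≠ 0 := by linarith
            field_simp
            ring
    have hCnn : 0 ≤ C ε := by
      rw [hC]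
      have := hpe_nonneg vp (by linarith)
      have h4 : (0:ℝ) ≤ vp * vp * |se ε - s| / μ := by positivity
      have h5 : (0:ℝ) ≤ vp / (μ * (s / 2)) * (pe ε vp + ε ^ (1 / (γ + 1))) := by
        apply mul_nonneg (by positivity)
        have : (0:ℝ) < ε ^ (1 / (γ + 1)) := Real.rpow_pos_of_pos hε0 _
        linarith
      linarith
    have hexp1 : 1 ≤ Real.exp (Kr * R) := Real.one_le_exp (by positivity)
    have haerrB : a ≤ errB ε := by
      show a ≤ ε ^ (1 / (γ + 1)) * Real.exp (Kr * R) + C ε / Kr * (Real.exp (Kr * R) - 1)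
      rw [← haa]
      have h6 : 0 ≤ C ε / Kr * (Real.exp (Kr * R) - 1) := by
        apply mul_nonneg (div_nonneg hCnn hKr0.le)
        linarith
      nlinarith
    rcases le_or_gt x 0 with hx0 | hx0
    · have hv1 : vlim x = 1 := by rw [hvlim, if_pos hx0]
      rw [hv1]
      have h1' : vm ε < vb ε x := (hrange' x).1
      have h2' : vb ε x ≤ 1 + a := by rw [← hvb0]; exact hmono' hx0
      have habs : |vb ε x - 1| ≤ a := abs_le.2 ⟨by linarith, by linarith⟩
      calc |vb ε x - 1| ≤ a := habs
        _ ≤ errB ε := haerrB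
        _ < δ := hεerr
    · -- Gronwall part
      have hσ0 : 0 < se ε := lt_trans (by positivity) hεse
      have hfc : ContinuousOn (vb ε) (Icc 0 R) := fun t _ =>
        ((hode ε hεε₀ t).continuousAt).continuousWithinAt
      have hfd : ∀ t ∈ Ico (0:ℝ) R,
          HasDerivWithinAt (vb ε) (vb ε t / (μ * se ε) * Φ ε (vb ε t)) (Ici t) t :=
        fun t _ => (hode ε hεε₀ t).hasDerivWithinAt
      have hfs : ∀ t ∈ Ico (0:ℝ) R, vb ε t ∈ Icc (0:ℝ) vp := by
        intro t _
        have := (hrange' t).1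
        exact ⟨by linarith, (hrange' t).2.le⟩
      have fbound : ∀ t ∈ Ico (0:ℝ) R,
          dist (vb ε t / (μ * se ε) * Φ ε (vb ε t))
            ((fun _ v : ℝ => s * v * (vp - v) / μ) t (vb ε t)) ≤ C ε := by
        intro t ht
        have hbt := hrange' t
        have hb1 : 1 < vb ε t := lt_trans hvm1 hbt.1
        have hbvp : vb ε t < vp := hbt.2
        have hQ := hpe_le t ht.1
        have hQ0 := hpe_nonneg (vb ε t) hb1
        have hP0 := hpe_nonneg vp (by linarith)
        rw [Real.dist_eq]
        have hid : vb ε t / (μ * se ε) * Φ ε (vb ε t) - s * vb ε t * (vp - vb ε t) / μ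
            = vb ε t * (vp - vb ε t) * (se ε - s) / μ
              + vb ε t / (μ * se ε) * (pe ε vp - pe ε (vb ε t)) := by
          rw [hΦ]
          field_simp
          ring
        show |vb ε t / (μ * se ε) * Φ ε (vb ε t) - s * vb ε t * (vp - vb ε t) / μ| ≤ C ε
        rw [hid]
        have e1 : |vb ε t * (vp - vb ε t) * (se ε - s) / μ| ≤ vp * vp * |se ε - s| / μ := by
          rw [abs_div, abs_of_pos hμ, abs_mul, abs_mul,
            abs_of_pos (by linarith : (0:ℝ) < vb ε t), abs_of_pos (by linarith : (0:ℝ) < vp - vb ε t)]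
          gcongr <;> linarith
        have e2 : |vb ε t / (μ * se ε) * (pe ε vp - pe ε (vb ε t))|
            ≤ vp / (μ * (s / 2)) * (pe ε vp + a) := by
          rw [abs_mul, abs_div, abs_of_pos (by linarith : (0:ℝ) < vb ε t),
            abs_of_pos (by positivity : (0:ℝ) < μ * se ε)]
          apply mul_le_mul
          · exact div_le_div₀ (by linarith) hbvp.le (by positivity) (by nlinarith)
          · refine le_trans (abs_sub _ _) ?_
            rw [abs_of_nonneg hP0, abs_of_nonneg hQ0]
            linarith
          · exact abs_nonneg _
          · positivity
        calc |vb ε t * (vp - vb ε t) * (se ε - s) / μ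
              + vb ε t / (μ * se ε) * (pe ε vp - pe ε (vb ε t))|
            ≤ |vb ε t * (vp - vb ε t) * (se ε - s) / μ|
              + |vb ε t / (μ * se ε) * (pe ε vp - pe ε (vb ε t))| := abs_add_le _ _
          _ ≤ C ε := by
              show _ ≤ vp * vp * |se ε - s| / μ + vp / (μ * (s / 2)) * (pe ε vp + ε ^ (1 / (γ + 1)))
              rw [← haa]
              linarith
      have hgc : ContinuousOn vlim (Icc 0 R) := by
        have hg : ContinuousOn glog (Icc 0 R) := by
          apply Continuous.continuousOn
          rw [continuous_iff_continuousAt]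
          exact fun y => (glog_hasDerivAt s vp μ hμ hvp1 y).continuousAt
        exact hg.congr fun y hy => hvlim_eq y hy.1
      have hgd : ∀ t ∈ Ico (0:ℝ) R,
          HasDerivWithinAt vlim (s * vlim t * (vp - vlim t) / μ) (Ici t) t := by
        intro t ht
        have h := (glog_hasDerivAt s vp μ hμ hvp1 t).hasDerivWithinAt (s := Ici t)
        have heq : ∀ y ∈ Ici t, vlim y = glog y := fun y hy => hvlim_eq y (le_trans ht.1 hy)
        have ht' : vlim t = glog t := hvlim_eq t ht.1
        rw [ht']
        exact h.congr heq ht'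
      have gbound : ∀ t ∈ Ico (0:ℝ) R,
          dist (s * vlim t * (vp - vlim t) / μ)
            ((fun _ v : ℝ => s * v * (vp - v) / μ) t (vlim t)) ≤ 0 := by
        intro t _
        simp
      have hgs : ∀ t ∈ Ico (0:ℝ) R, vlim t ∈ Icc (0:ℝ) vp := by
        intro t ht
        rw [hvlim_eq t ht.1]
        exact hglog_mem t
      have hinit : dist (vb ε 0) (vlim 0) ≤ a := by
        rw [Real.dist_eq, hvb0, hvlim_eq 0 le_rfl, hglog0]
        simp [abs_of_nonneg ha_pos.le]
      have grb := dist_le_of_approx_trajectories_ODE_of_mem (fun t _ => hVlip t) hfc hfd fbound hfs hgc hgd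
        gbound hgs hinit
      have hxIcc : x ∈ Icc (0:ℝ) R := ⟨hx0.le, le_trans (le_abs_self x) hx⟩
      have hgrb := grb x hxIcc
      rw [Real.dist_eq] at hgrb
      have hgb : gronwallBound a (K' : ℝ) (C ε + 0) (x - 0) ≤ errB ε := by
        show gronwallBound a (K' : ℝ) (C ε + 0) (x - 0)
          ≤ ε ^ (1 / (γ + 1)) * Real.exp (Kr * R) + C ε / Kr * (Real.exp (Kr * R) - 1)
        rw [gronwallBound_of_K_ne_0 (by rw [hK'c]; exact ne_of_gt hKr0), ← haa, hK'c]
        simp only [add_zero, sub_zero]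
        have hexp : Real.exp (Kr * x) ≤ Real.exp (Kr * R) := by
          apply Real.exp_le_exp.2
          have : x ≤ R := le_trans (le_abs_self x) hx
          nlinarith
        have hh1 : 0 ≤ a * (Real.exp (Kr * R) - Real.exp (Kr * x)) :=
          mul_nonneg ha_pos.le (by linarith)
        have hh2 : 0 ≤ C ε / Kr * (Real.exp (Kr * R) - Real.exp (Kr * x)) :=
          mul_nonneg (div_nonneg hCnn hKr0.le) (by linarith)
        nlinarith
      calc |vb ε x - vlim x| ≤ gronwallBound a (K' : ℝ) (C ε + 0) (x - 0) := hgrb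
        _ ≤ errB ε := hgb
        _ < δ := hεerr
  refine ⟨fun n => min ε₀ 1 / ((n : ℝ) + 2), ?_, ?_, ?_⟩
  · intro n
    constructor
    · positivity
    · calc min ε₀ 1 / ((n : ℝ) + 2) < min ε₀ 1 := by
            apply div_lt_self hm01
            have : (0 : ℝ) ≤ (n : ℝ) := Nat.cast_nonneg n
            linarith
        _ ≤ ε₀ := min_le_left _ _
  · have hden : Tendsto (fun n : ℕ => ((n : ℝ) + 2)) atTop atTop :=
      tendsto_atTop_add_const_right _ 2 tendsto_natCast_atTop_atTop
    simpa using tendsto_const_nhds.div_atTop hden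
  · intro R hR δ hδ
    have hseq : Tendsto (fun n : ℕ => min ε₀ 1 / ((n : ℝ) + 2)) atTop l := by
      rw [hl, tendsto_nhdsWithin_iff]
      constructor
      · have hden : Tendsto (fun n : ℕ => ((n : ℝ) + 2)) atTop atTop :=
          tendsto_atTop_add_const_right _ 2 tendsto_natCast_atTop_atTop
        simpa using tendsto_const_nhds.div_atTop hden
      · exact Eventually.of_forall fun n => mem_Ioi.2 (by positivity)
    obtain ⟨N, hN⟩ := Filter.eventually_atTop.1 (hseq.eventually (key R hR δ hδ))
    exact ⟨N, fun n hn x hx => hN n hn x hx⟩
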